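/- For any sequence i = (i₁,…,i_N) ∈ M(α₁,α₂), the pair of polynomials P^i = (P₁^i, P₂^i), where P_m^i(u) = ∏_{k=1}^N (u - η_k)^{1-δ_{i_k,m}} and η_k = α_{i₁} + ⋯ + α_{i_k}, satisfies P₁^i(u)P₂^i(u) = P₁^i(u+α₂)P₂^i(u+α₁). -/

import Mathlib

open Polynomial

def wsum (α₁ α₂ : ℂ) (l : List Bool) : ℂ :=
  (l.map (fun b => if b then α₂ else α₁)).sum

noncomputable def Pfun (α₁ α₂ : ℂ) (mb : Bool) (l : List Bool) : Polynomial ℂ :=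
  ∏ k ∈ Finset.range l.length,
    if l.getD k false = mb then 1
    else (Polynomial.X - Polynomial.C (wsum α₁ α₂ (l.take (k + 1))))

lemma wsum_take_succ (α₁ α₂ : ℂ) (l : List Bool) (k : ℕ) (hk : k < l.length) :
    wsum α₁ α₂ (l.take (k + 1)) =
      wsum α₁ α₂ (l.take k) + (if l.getD k false then α₂ else α₁) := by
  simp only [wsum, List.take_succ, List.map_append, List.sum_append,
    List.getElem?_eq_getElem hk, List.getD_eq_getElem l false hk, Option.toList_some,
    List.map_cons, List.map_nil, List.sum_cons, List.sum_nil, add_zero]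

theorem stmt12 (α₁ α₂ : ℂ) (hα₁ : α₁ ≠ 0) (hα₂ : α₂ ≠ 0)
    (l : List Bool) (hM : wsum α₁ α₂ l = 0) :
    Pfun α₁ α₂ false l * Pfun α₁ α₂ true l =
      (Pfun α₁ α₂ false l).comp (X + C α₂) * (Pfun α₁ α₂ true l).comp (X + C α₁) := by
  set N := l.length with hN
  set η : ℕ → ℂ := fun k => wsum α₁ α₂ (l.take k) with hη
  have hLHS : Pfun α₁ α₂ false l * Pfun α₁ α₂ true l
      = ∏ k ∈ Finset.range N, (X - C (η (k + 1))) := by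
    rw [Pfun, Pfun, ← Finset.prod_mul_distrib]
    refine Finset.prod_congr rfl fun k _ => ?_
    cases h : l.getD k false <;> simp [h] <;> rfl
  have hRHS : (Pfun α₁ α₂ false l).comp (X + C α₂) * (Pfun α₁ α₂ true l).comp (X + C α₁)
      = ∏ k ∈ Finset.range N, (X - C (η k)) := by
    rw [Pfun, Pfun, prod_comp, prod_comp, ← Finset.prod_mul_distrib]
    refine Finset.prod_congr rfl fun k hk => ?_
    rw [Finset.mem_range] at hk
    have hs := wsum_take_succ α₁ α₂ l k hk
    cases h : l.getD k false <;>
      simp only [h, hs, if_true, if_false, Bool.false_eq_true, one_comp, sub_comp, X_comp,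
        C_comp, one_mul, mul_one, reduceIte] <;> ring_nf <;> rw [hη] <;> ring_nf <;>
      simp [C_add] <;> ring
  rw [hLHS, hRHS]
  have h0 : (X : ℂ[X]) - C (η 0) = X - C (η N) := by
    have e1 : η N = 0 := by rw [hη]; simp only [hN, List.take_length]; exact hM
    have e2 : η 0 = 0 := by simp [hη, wsum]
    rw [e1, e2]
  have h1 := Finset.prod_range_succ' (fun k => (X : ℂ[X]) - C (η k)) N
  have h2 := Finset.prod_range_succ (fun k => (X : ℂ[X]) - C (η k)) N
  have key : (∏ k ∈ Finset.range N, ((X : ℂ[X]) - C (η (k + 1)))) * (X - C (η 0))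
      = (∏ k ∈ Finset.range N, ((X : ℂ[X]) - C (η k))) * (X - C (η N)) := by
    rw [← h1, ← h2]
  rw [h0] at key
  have hXne : (X : ℂ[X]) - C (η N) ≠ 0 := X_sub_C_ne_zero _
  exact mul_right_cancel₀ hXne key
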